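/- There is an absolute constant C such that for every SLP P of size m over the alphabet {0,1} there exists a udpda A over {a} of size at most C·m such that the characteristic sequence of L(A) equals 0 · str(P) · 0^ω; moreover A can be chosen so that (q0,⊥) ⊢* (q̄,⊥) by a computation reading exactly a^{|str(P)|}, where q0 is the initial state and q̄ is a non-final state at which no move is available. -/

import Mathlib

/-- A straight-line program in Chomsky normal form over alphabet `α`:
nonterminals are `Fin n`, each production is either a terminal or a pair of
nonterminals with strictly smaller indices (this index condition is a
topological ordering witnessing acyclicity of the SLP).  The size of such an
SLP is its number `n` of nonterminals. -/
structure CnfSLP (α : Type) where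
  n : ℕ
  ax : Fin n
  prod : Fin n → α ⊕ (Fin n × Fin n)
  wf : ∀ (i B C : Fin n), prod i = Sum.inr (B, C) → B < i ∧ C < i

namespace CnfSLP

variable {α : Type}

/-- The word generated by nonterminal `i`. -/
def strAt (P : CnfSLP α) : Fin P.n → List α
  | i =>
    match h : P.prod i with
    | Sum.inl a => [a]
    | Sum.inr (B, C) => P.strAt B ++ P.strAt C
termination_by i => i.val
decreasing_by
  · exact (P.wf i B C h).1
  · exact (P.wf i B C h).2

/-- The word generated by the SLP (from its axiom). -/
def str (P : CnfSLP α) : List α := P.strAt P.ax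

/-- The size of an SLP: the number of nonterminals (in Chomsky normal form). -/
def size (P : CnfSLP α) : ℕ := P.n

end CnfSLP

/-- `Generates u w c` means the infinite sequence `u · w^ω` is well defined
(`w` is nonempty) and equals the sequence `c`. -/
def Generates {α : Type} (u w : List α) (c : ℕ → α) : Prop :=
  w ≠ [] ∧ ∀ i : ℕ,
    (if i < u.length then u[i]? else w[(i - u.length) % w.length]?) = some (c i)

/-- The data of a unary pushdown automaton over the input alphabet `{a}`
(a transition whose `Bool` component is `true` reads `a`, otherwise it
reads `ε`): bottom-of-stack symbol, initial state, final states, transitions. -/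
structure PrePDA (Q Γ : Type) where
  bot : Γ
  init : Q
  final : Set Q
  δ : Set (Q × Bool × Γ × Q × List Γ)

namespace PrePDA

variable {Q Γ : Type}

/-- Valid stack contents: a word in `(Γ∖{⊥})*⊥`. -/
def IsStack (A : PrePDA Q Γ) (s : List Γ) : Prop :=
  ∃ s', A.bot ∉ s' ∧ s = s' ++ [A.bot]

/-- A move from configuration `c1` to `c2` reading `a` (if `σ = true`)
or `ε` (if `σ = false`). -/
def Move (A : PrePDA Q Γ) (c1 : Q × List Γ) (σ : Bool) (c2 : Q × List Γ) : Prop :=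
  ∃ γ w, (c1.1, σ, γ, c2.1, w) ∈ A.δ ∧
    (((γ ≠ A.bot ∨ w ≠ []) ∧ ∃ s', c1.2 = γ :: s' ∧ c2.2 = w ++ s') ∨
      (γ = A.bot ∧ w = [] ∧ c1.2 = [A.bot] ∧ c2.2 = [A.bot]))

/-- `Steps A c1 k c2`: there is a finite computation from `c1` to `c2`
reading the word `a^k`. -/
inductive Steps (A : PrePDA Q Γ) : Q × List Γ → ℕ → Q × List Γ → Prop
  | refl (c : Q × List Γ) : Steps A c 0 c
  | tail {c1 : Q × List Γ} {k : ℕ} {c2 : Q × List Γ} {σ : Bool} {c3 : Q × List Γ} :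
      Steps A c1 k c2 → A.Move c2 σ c3 → Steps A c1 (k + (if σ then 1 else 0)) c3

/-- The language of the automaton, as a set of natural numbers:
`a^k` is accepted iff `k` is in this set (acceptance by final state,
starting from the configuration `(q₀, ⊥)`). -/
def lang (A : PrePDA Q Γ) : Set ℕ :=
  {k | ∃ c : Q × List Γ, A.Steps (A.init, [A.bot]) k c ∧ c.1 ∈ A.final}

end PrePDA

/-- A unary deterministic pushdown automaton (udpda): finitely many states and
stack symbols, well-formed transitions (each pushed word has length at most 2,
and the bottom symbol is neither pushed above other symbols nor removed), and
at most one move available at every configuration. -/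
structure UDPDA (Q Γ : Type) extends PrePDA Q Γ where
  finQ : Finite Q
  finΓ : Finite Γ
  wf : ∀ q1 σ γ q2 w, (q1, σ, γ, q2, w) ∈ δ →
    w.length ≤ 2 ∧
      ((γ ≠ bot ∧ bot ∉ w) ∨ (γ = bot ∧ (w = [] ∨ ∃ w', bot ∉ w' ∧ w = w' ++ [bot])))
  det : ∀ c σ1 c1 σ2 c2, toPrePDA.IsStack c.2 →
    toPrePDA.Move c σ1 c1 → toPrePDA.Move c σ2 c2 → σ1 = σ2 ∧ c1 = c2

namespace UDPDA

variable {Q Γ : Type}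

/-- The size of a udpda: `|Q| · |Γ|`. -/
noncomputable def size (A : UDPDA Q Γ) : ℕ := Nat.card Q * Nat.card Γ

/-- The language of a udpda. -/
def lang (A : UDPDA Q Γ) : Set ℕ := A.toPrePDA.lang

end UDPDA


/-! ### Auxiliary construction: from an SLP to a udpda -/

namespace SlpUdpda

/-- The state set of the constructed udpda. -/
inductive St : Type
  | start | run (b : Bool) | halt
deriving DecidableEq, Fintype

variable (P : CnfSLP Bool)

/-- The stack alphabet: nonterminals plus the bottom symbol `none`. -/
abbrev Sym := Option (Fin P.n)

/-- Transition set. -/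
def delta : Set (St × Bool × Sym P × St × List (Sym P)) :=
  {x | x = (St.start, false, none, St.run false, [some P.ax, none])} ∪
  {x | ∃ b X B C, P.prod X = Sum.inr (B, C) ∧
        x = (St.run b, false, some X, St.run b, [some B, some C])} ∪
  {x | ∃ b X t, P.prod X = Sum.inl t ∧ x = (St.run b, true, some X, St.run t, [])} ∪
  {x | ∃ b, x = (St.run b, false, none, St.halt, [])}

/-- The underlying PDA. -/
def pda : PrePDA St (Sym P) where
  bot := none
  init := St.start
  final := {St.run true}
  δ := delta P

lemma strAt_inl {i : Fin P.n} {a : Bool} (h : P.prod i = Sum.inl a) :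
    P.strAt i = [a] := by
  rw [CnfSLP.strAt]; split <;> simp_all

lemma strAt_inr {i B C : Fin P.n} (h : P.prod i = Sum.inr (B, C)) :
    P.strAt i = P.strAt B ++ P.strAt C := by
  rw [CnfSLP.strAt]; split <;> simp_all

lemma strAt_ne_nil (i : Fin P.n) : P.strAt i ≠ [] := by
  rcases h : P.prod i with a | ⟨B, C⟩
  · rw [strAt_inl P h]; simp
  · rw [strAt_inr P h]
    have hB := strAt_ne_nil B
    intro hc
    exact hB (List.append_eq_nil_iff.mp hc).1
termination_by i.val
decreasing_by exact (P.wf i B C h).1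

lemma getLastD_append (u v : List Bool) (d : Bool) :
    (u ++ v).getLastD d = v.getLastD (u.getLastD d) := by
  rw [List.getLastD_eq_getLast?, List.getLastD_eq_getLast?, List.getLastD_eq_getLast?,
    List.getLast?_append]
  cases hv : v.getLast? <;> simp [Option.or, hv]

/-! Move constructors. -/

lemma move_start (s : List (Sym P)) :
    (pda P).Move (St.start, none :: s) false (St.run false, some P.ax :: none :: s) :=
  ⟨none, [some P.ax, none], Or.inl (Or.inl (Or.inl rfl)),
    Or.inl ⟨Or.inr (by simp), s, rfl, rfl⟩⟩

lemma move_inr {X B C : Fin P.n} (h : P.prod X = Sum.inr (B, C)) (b : Bool)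
    (s : List (Sym P)) :
    (pda P).Move (St.run b, some X :: s) false (St.run b, some B :: some C :: s) :=
  ⟨some X, [some B, some C], Or.inl (Or.inl (Or.inr ⟨b, X, B, C, h, rfl⟩)),
    Or.inl ⟨Or.inl (by simp [pda]), s, rfl, rfl⟩⟩

lemma move_inl {X : Fin P.n} {t : Bool} (h : P.prod X = Sum.inl t) (b : Bool)
    (s : List (Sym P)) :
    (pda P).Move (St.run b, some X :: s) true (St.run t, s) :=
  ⟨some X, [], Or.inl (Or.inr ⟨b, X, t, h, rfl⟩),
    Or.inl ⟨Or.inl (by simp [pda]), s, rfl, rfl⟩⟩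

lemma move_halt (b : Bool) :
    (pda P).Move (St.run b, [none]) false (St.halt, [none]) :=
  ⟨none, [], Or.inr ⟨b, rfl⟩, Or.inr ⟨rfl, rfl, rfl, rfl⟩⟩

/-- No move is available at `halt`, regardless of the stack. -/
lemma no_move_halt (s : List (Sym P)) (σ : Bool) (c' : St × List (Sym P)) :
    ¬ (pda P).Move (St.halt, s) σ c' := by
  rintro ⟨γ, w, hδ, -⟩
  simp only [pda, delta, Set.mem_union, Set.mem_setOf_eq, Prod.mk.injEq] at hδ
  rcases hδ with ((⟨h1, -⟩ | ⟨b, X, B, C, -, h1, -⟩) | ⟨b, X, t, -, h1, -⟩) | ⟨b, h1, -⟩ <;>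
    simp at h1

@[simp] lemma pda_bot : (pda P).bot = none := rfl

/-- Inversion for moves from a configuration with a valid stack. -/
lemma move_inv (c : St × List (Sym P)) (σ : Bool) (c' : St × List (Sym P))
    (hs : (pda P).IsStack c.2) (h : (pda P).Move c σ c') :
    (c = (St.start, [none]) ∧ σ = false ∧ c' = (St.run false, [some P.ax, none])) ∨
    (∃ b X B C s, P.prod X = Sum.inr (B, C) ∧ c = (St.run b, some X :: s) ∧ σ = false ∧
      c' = (St.run b, some B :: some C :: s)) ∨
    (∃ b X t s, P.prod X = Sum.inl t ∧ c = (St.run b, some X :: s) ∧ σ = true ∧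
      c' = (St.run t, s)) ∨
    (∃ b, c = (St.run b, [none]) ∧ σ = false ∧ c' = (St.halt, [none])) := by
  obtain ⟨cq, cs⟩ := c
  obtain ⟨cq', cs'⟩ := c'
  obtain ⟨γ, w, hδ, hcase⟩ := h
  obtain ⟨u, hu, hustack⟩ := hs
  simp only [pda_bot] at hcase hustack hu
  simp only [pda, delta, Set.mem_union, Set.mem_setOf_eq, Prod.mk.injEq] at hδ
  rcases hδ with ((⟨h1, h2, h3, h4, h5⟩ | ⟨b, X, B, C, hp, h1, h2, h3, h4, h5⟩) |
      ⟨b, X, t, hp, h1, h2, h3, h4, h5⟩) | ⟨b, h1, h2, h3, h4, h5⟩ <;>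
    subst h1 h2 h3 h4 h5
  · -- start transition
    rcases hcase with ⟨-, s', hc1, hc2⟩ | ⟨-, hw, -, -⟩
    · have hs' : s' = [] := by
        rw [hc1] at hustack
        cases u with
        | nil => simpa using hustack.symm
        | cons y u' =>
          exfalso
          have hy := congrArg List.head? hustack
          simp at hy
          exact hu (by simp [← hy])
      subst hs'
      simp [hc1, hc2]
    · simp at hw
  · -- binary production
    rcases hcase with ⟨-, s', hc1, hc2⟩ | ⟨hb, -, -, -⟩
    · refine Or.inr (Or.inl ⟨b, X, B, C, s', hp, ?_, rfl, ?_⟩) <;> simp [hc1, hc2]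
    · simp at hb
  · -- terminal production
    rcases hcase with ⟨-, s', hc1, hc2⟩ | ⟨hb, -, -, -⟩
    · refine Or.inr (Or.inr (Or.inl ⟨b, X, t, s', hp, ?_, rfl, ?_⟩)) <;> simp [hc1, hc2]
    · simp at hb
  · -- halting transition
    rcases hcase with ⟨hne, -⟩ | ⟨-, -, hc1, hc2⟩
    · simp at hne
    · exact Or.inr (Or.inr (Or.inr ⟨b, by simp [hc1], rfl, by simp [hc2]⟩))

/-- Expansion of a list of nonterminals. -/
def exp : List (Fin P.n) → List Bool
  | [] => []
  | X :: v => P.strAt X ++ exp v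

/-- The invariant characterizing all configurations reachable after reading `a^k`. -/
def Inv (k : ℕ) (c : St × List (Sym P)) : Prop :=
  (k = 0 ∧ c = (St.start, [none])) ∨
  (∃ v : List (Fin P.n), k ≤ P.str.length ∧ exp P v = P.str.drop k ∧
    c = (St.run ((P.str.take k).getLastD false), v.map some ++ [none])) ∨
  (k = P.str.length ∧ c = (St.halt, [none]))

lemma inv_isStack {k : ℕ} {c : St × List (Sym P)} (h : Inv P k c) :
    (pda P).IsStack c.2 := by
  rcases h with ⟨-, rfl⟩ | ⟨v, -, -, rfl⟩ | ⟨-, rfl⟩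
  · exact ⟨[], by simp, rfl⟩
  · exact ⟨v.map some, by simp [pda], rfl⟩
  · exact ⟨[], by simp, rfl⟩

lemma inv_preserve {k : ℕ} {c c' : St × List (Sym P)} {σ : Bool}
    (h : Inv P k c) (hm : (pda P).Move c σ c') :
    Inv P (k + if σ then 1 else 0) c' := by
  have hinv := move_inv P c σ c' (inv_isStack P h) hm
  rcases h with ⟨rfl, rfl⟩ | ⟨v, hk, he, rfl⟩ | ⟨rfl, rfl⟩
  · -- from the start configuration
    rcases hinv with ⟨-, rfl, rfl⟩ | ⟨b, X, B, C, s, -, hc, -, -⟩ |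
        ⟨b, X, t, s, -, hc, -, -⟩ | ⟨b, hc, -, -⟩ <;>
      [skip; exact absurd (congrArg Prod.fst hc) (by simp);
       exact absurd (congrArg Prod.fst hc) (by simp);
       exact absurd (congrArg Prod.fst hc) (by simp)]
    refine Or.inr (Or.inl ⟨[P.ax], by simp, ?_, by simp⟩)
    simp [exp, CnfSLP.str]
  · -- from a running configuration
    rcases hinv with ⟨hc, -, -⟩ | ⟨b, X, B, C, s, hp, hc, rfl, rfl⟩ |
        ⟨b, X, t, s, hp, hc, rfl, rfl⟩ | ⟨b, hc, rfl, rfl⟩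
    · exact absurd (congrArg Prod.fst hc) (by simp)
    · -- binary expansion (ε-move)
      have hstack : v.map some ++ [(none : Sym P)] = some X :: s := congrArg Prod.snd hc
      cases v with
      | nil => simp at hstack
      | cons Y v' =>
        simp only [List.map_cons, List.cons_append, List.cons.injEq, Option.some.injEq]
          at hstack
        obtain ⟨rfl, hs⟩ := hstack
        have hb : (St.run ((P.str.take k).getLastD false) : St) = St.run b :=
          congrArg Prod.fst hc
        simp only [St.run.injEq] at hb
        cases hb
        show Inv P k _
        refine Or.inr (Or.inl ⟨B :: C :: v', hk, ?_, ?_⟩)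
        · simp only [exp, ← List.append_assoc, ← strAt_inr P hp]
          simpa [exp] using he
        · simp [← hs]
    · -- terminal production (a-move)
      have hstack : v.map some ++ [(none : Sym P)] = some X :: s := congrArg Prod.snd hc
      cases v with
      | nil => simp at hstack
      | cons Y v' =>
        simp only [List.map_cons, List.cons_append, List.cons.injEq, Option.some.injEq]
          at hstack
        obtain ⟨rfl, hs⟩ := hstack
        have hdrop : P.str.drop k = t :: exp P v' := by
          rw [← he]; simp [exp, strAt_inl P hp]
        have hklt : k < P.str.length := by
          by_contra hle
          have : P.str.drop k = [] := List.drop_eq_nil_of_le (by omega)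
          rw [this] at hdrop; exact (List.cons_ne_nil _ _) hdrop.symm
        have hget : P.str[k]? = some t := by
          rw [← List.head?_drop, hdrop]; rfl
        have htake : (P.str.take (k + 1)).getLastD false = t := by
          rw [List.take_succ, hget, getLastD_append]
          simp
        show Inv P (k + 1) _
        refine Or.inr (Or.inl ⟨v', by omega, ?_, ?_⟩)
        · have h2 : P.str.drop (k + 1) = (P.str.drop k).tail := List.tail_drop.symm
          rw [h2, hdrop]; rfl
        · rw [htake, ← hs]
    · -- halting (ε-move)
      have hstack : v.map some ++ [(none : Sym P)] = [none] := congrArg Prod.snd hc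
      have hv : v = [] := by
        cases v with
        | nil => rfl
        | cons Y v' => simp at hstack
      subst hv
      show Inv P k _
      have : P.str.length ≤ k := by
        have : P.str.drop k = [] := by rw [← he]; rfl
        exact List.drop_eq_nil_iff.mp this
      have hkL : k = P.str.length := le_antisymm hk this
      exact Or.inr (Or.inr ⟨hkL, rfl⟩)
  · -- from the halting configuration: no moves
    exact absurd hm (no_move_halt P _ _ _)

/-! Step combinators. -/

lemma steps_trans {Q Γ : Type} {A : PrePDA Q Γ} {c1 c2 c3 : Q × List Γ} {j k : ℕ}
    (h1 : A.Steps c1 j c2) (h2 : A.Steps c2 k c3) : A.Steps c1 (j + k) c3 := by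
  induction h2 with
  | refl => exact h1
  | tail hs hm ih =>
    rw [← Nat.add_assoc]
    exact PrePDA.Steps.tail ih hm

lemma steps_single {Q Γ : Type} {A : PrePDA Q Γ} {c1 c2 : Q × List Γ} {σ : Bool}
    (h : A.Move c1 σ c2) : A.Steps c1 (if σ then 1 else 0) c2 := by
  simpa using PrePDA.Steps.tail (PrePDA.Steps.refl c1) h

lemma steps_eps {Q Γ : Type} {A : PrePDA Q Γ} {c1 c2 c3 : Q × List Γ} {k : ℕ}
    (h : A.Move c1 false c2) (h2 : A.Steps c2 k c3) : A.Steps c1 k c3 := by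
  simpa using steps_trans (steps_single h) h2

lemma steps_cast {Q Γ : Type} {A : PrePDA Q Γ} {c1 c2 : Q × List Γ} {j k : ℕ}
    (h : A.Steps c1 j c2) (e : j = k) : A.Steps c1 k c2 := e ▸ h

lemma steps_inv {k : ℕ} {c : St × List (Sym P)}
    (h : (pda P).Steps (St.start, [none]) k c) : Inv P k c := by
  have main : ∀ {c0 : St × List (Sym P)} {k0 : ℕ} {kk : ℕ} {cc : St × List (Sym P)},
      (pda P).Steps c0 kk cc → Inv P k0 c0 → Inv P (k0 + kk) cc := by
    intro c0 k0 kk cc hst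
    induction hst with
    | refl => intro h0; simpa using h0
    | tail hs hm ih =>
      intro h0
      rw [← Nat.add_assoc]
      exact inv_preserve P (ih h0) hm
  simpa using main h (Or.inl ⟨rfl, rfl⟩)

/-- Key existence lemma: from a configuration with `X` on top, the automaton reads
`a^j` for each prefix length `j` of `strAt X`, and on completion pops `X`. -/
lemma steps_strAt : ∀ (N : ℕ) (X : Fin P.n), X.val < N → ∀ (b : Bool)
    (s : List (Sym P)) (j : ℕ), j ≤ (P.strAt X).length →
    ∃ s2, (pda P).Steps (St.run b, some X :: s) j
        (St.run (((P.strAt X).take j).getLastD b), s2) ∧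
      (j = (P.strAt X).length → s2 = s) := by
  intro N
  induction N with
  | zero => intro X hX; omega
  | succ N ih =>
    intro X hX b s j hj
    rcases hp : P.prod X with t | ⟨B, C⟩
    · rw [strAt_inl P hp] at hj ⊢
      simp only [List.length_singleton] at hj
      have hj01 : j = 0 ∨ j = 1 := by omega
      rcases hj01 with rfl | rfl
      · exact ⟨some X :: s, PrePDA.Steps.refl _, by simp⟩
      · exact ⟨s, by simpa using steps_single (move_inl P hp b s), fun _ => rfl⟩
    · rw [strAt_inr P hp] at hj ⊢
      have hB : (B : ℕ) < N := by have := (P.wf X B C hp).1; omega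
      have hC : (C : ℕ) < N := by have := (P.wf X B C hp).2; omega
      have hBne := strAt_ne_nil P B
      have hCne := strAt_ne_nil P C
      have hBpos : 0 < (P.strAt B).length := List.length_pos_iff.mpr hBne
      have hCpos : 0 < (P.strAt C).length := List.length_pos_iff.mpr hCne
      rw [List.length_append] at hj
      rcases Nat.eq_zero_or_pos j with rfl | hjpos
      · exact ⟨some X :: s, PrePDA.Steps.refl _,
          fun h0 => by rw [List.length_append] at h0; omega⟩
      · by_cases hjB : j ≤ (P.strAt B).length
        · obtain ⟨s2, hst, -⟩ := ih B hB b (some C :: s) j hjB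
          refine ⟨s2, ?_, fun hlen => by rw [List.length_append] at hlen; omega⟩
          have h1 := steps_eps (move_inr P hp b s) hst
          rwa [List.take_append_of_le_length hjB]
        · push_neg at hjB
          obtain ⟨s2, hstB, hcondB⟩ := ih B hB b (some C :: s) (P.strAt B).length le_rfl
          rw [hcondB rfl] at hstB
          obtain ⟨s3, hstC, hcondC⟩ :=
            ih C hC (((P.strAt B).take (P.strAt B).length).getLastD b) s
              (j - (P.strAt B).length) (by omega)
          refine ⟨s3, ?_, fun hlen => by
            rw [List.length_append] at hlen; exact hcondC (by omega)⟩
          have h1 := steps_eps (move_inr P hp b s) hstB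
          have h2 := steps_cast (steps_trans h1 hstC) (by omega : (P.strAt B).length + (j - (P.strAt B).length) = j)
          have hstate : (((P.strAt B) ++ (P.strAt C)).take j).getLastD b =
              ((P.strAt C).take (j - (P.strAt B).length)).getLastD
                (((P.strAt B).take (P.strAt B).length).getLastD b) := by
            rw [List.take_append, getLastD_append,
              List.take_of_length_le (le_of_lt hjB), List.take_length]
          rwa [hstate]

lemma run_prefix (i : ℕ) (hi : i ≤ P.str.length) :
    ∃ s2, (pda P).Steps (St.start, [none]) i
        (St.run ((P.str.take i).getLastD false), s2) ∧
      (i = P.str.length → s2 = [none]) := by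
  obtain ⟨s2, h, hc⟩ := steps_strAt P P.n P.ax P.ax.isLt false [none] i hi
  exact ⟨s2, steps_eps (move_start P []) h, hc⟩

lemma getLastD_take_succ {j : ℕ} (hj : j < P.str.length) :
    (P.str.take (j + 1)).getLastD false = P.str[j] := by
  rw [List.take_succ, List.getElem?_eq_getElem hj, getLastD_append]
  simp

/-- The constructed udpda. -/
def auto : UDPDA St (Sym P) where
  toPrePDA := pda P
  finQ := inferInstance
  finΓ := inferInstance
  wf := by
    intro q1 σ γ q2 w h
    simp only [pda, delta, Set.mem_union, Set.mem_setOf_eq, Prod.mk.injEq] at h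
    rcases h with ((⟨h1, h2, h3, h4, h5⟩ | ⟨b, X, B, C, hp, h1, h2, h3, h4, h5⟩) |
        ⟨b, X, t, hp, h1, h2, h3, h4, h5⟩) | ⟨b, h1, h2, h3, h4, h5⟩ <;>
      subst h1 h2 h3 h4 h5
    · exact ⟨by simp, Or.inr ⟨rfl, Or.inr ⟨[some P.ax], by simp [pda], rfl⟩⟩⟩
    · exact ⟨by simp, Or.inl ⟨by simp [pda], by simp [pda]⟩⟩
    · exact ⟨by simp, Or.inl ⟨by simp [pda], by simp [pda]⟩⟩
    · exact ⟨by simp, Or.inr ⟨rfl, Or.inl rfl⟩⟩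
  det := by
    intro c σ1 c1 σ2 c2 hs h1 h2
    have i1 := move_inv P c σ1 c1 hs h1
    have i2 := move_inv P c σ2 c2 hs h2
    rcases i1 with ⟨hc, rfl, rfl⟩ | ⟨b, X, B, C, s, hp, hc, rfl, rfl⟩ |
        ⟨b, X, t, s, hp, hc, rfl, rfl⟩ | ⟨b, hc, rfl, rfl⟩ <;>
      subst hc <;>
      rcases i2 with ⟨hc2, rfl, rfl⟩ | ⟨b2, X2, B2, C2, s2, hp2, hc2, rfl, rfl⟩ |
          ⟨b2, X2, t2, s2, hp2, hc2, rfl, rfl⟩ | ⟨b2, hc2, rfl, rfl⟩ <;>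
      simp_all

lemma lang_iff (i : ℕ) :
    i ∈ (auto P).lang ↔ (false :: P.str).getD i false = true := by
  constructor
  · rintro ⟨c, hst, hfin⟩
    have hinv := steps_inv P hst
    have hc1 : c.1 = St.run true := hfin
    rcases hinv with ⟨-, rfl⟩ | ⟨v, hk, -, rfl⟩ | ⟨-, rfl⟩
    · simp at hc1
    · simp only [St.run.injEq] at hc1
      cases i with
      | zero => simp at hc1
      | succ j =>
        have hj : j < P.str.length := by omega
        rw [getLastD_take_succ P hj] at hc1
        simp [List.getD_cons_succ, List.getD, List.getElem?_eq_getElem hj, hc1]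
    · simp at hc1
  · intro h
    cases i with
    | zero => simp at h
    | succ j =>
      rw [List.getD_cons_succ] at h
      have hj : j < P.str.length := by
        by_contra hle
        rw [List.getD_eq_default _ _ (by omega)] at h
        exact Bool.false_ne_true h
      rw [List.getD_eq_getElem _ _ hj] at h
      obtain ⟨s2, hst, -⟩ := run_prefix P (j + 1) (by omega)
      rw [getLastD_take_succ P hj, h] at hst
      exact ⟨(St.run true, s2), hst, rfl⟩

lemma full_run :
    (auto P).toPrePDA.Steps (St.start, [none]) P.str.length (St.halt, [none]) := by
  obtain ⟨s2, hst, hc⟩ := run_prefix P P.str.length le_rfl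
  rw [hc rfl] at hst
  exact steps_cast (PrePDA.Steps.tail hst (move_halt P _)) (by simp)

end SlpUdpda

/-- There is an absolute constant `C` such that for every SLP
`P` of size `m` over `{0,1}` there exists a udpda `A` over `{a}` of size at
most `C·m` whose language has characteristic sequence `0 · str(P) · 0^ω`;
moreover `A` can be chosen with a computation `(q₀,⊥) ⊢* (q̄,⊥)` reading
exactly `a^{|str(P)|}`, where `q̄` is a non-final state at which no move is
available. -/
theorem slp_to_udpda :
    ∃ C : ℕ, ∀ P : CnfSLP Bool,
      ∃ (Q Γ : Type) (A : UDPDA Q Γ) (qbar : Q),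
        A.size ≤ C * P.size ∧
        (∀ i : ℕ, i ∈ A.lang ↔ (false :: P.str).getD i false = true) ∧
        A.toPrePDA.Steps (A.init, [A.bot]) P.str.length (qbar, [A.bot]) ∧
        qbar ∉ A.final ∧
        (∀ (s : List Γ) (σ : Bool) (c' : Q × List Γ), ¬ A.toPrePDA.Move (qbar, s) σ c') := by
  refine ⟨8, fun P => ⟨SlpUdpda.St, SlpUdpda.Sym P, SlpUdpda.auto P, SlpUdpda.St.halt,
    ?_, SlpUdpda.lang_iff P, SlpUdpda.full_run P, ?_, ?_⟩⟩
  · have hn : 1 ≤ P.n := P.ax.pos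
    have h1 : Nat.card SlpUdpda.St = 4 := by rw [Nat.card_eq_fintype_card]; rfl
    have h2 : Nat.card (SlpUdpda.Sym P) = P.n + 1 := by simp [Nat.card_eq_fintype_card]
    simp only [UDPDA.size, h1, h2, CnfSLP.size]
    omega
  · intro h
    simp only [SlpUdpda.auto, SlpUdpda.pda, Set.mem_singleton_iff] at h
    exact absurd h (by simp)
  · exact fun s σ c' => SlpUdpda.no_move_halt P s σ c'
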